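/- arXiv:1801.05536 — 2 statements merged into one kernel-verified Lean document; each statement's English description precedes it below -/
import Mathlib

section
/- Every nontrivial finite nilpotent group G with derived length d satisfies 2^(d−1) ≤ Ω(|G|), where Ω(|G|) is the number of prime factors of |G| counted with multiplicity. -/
/-- `Omega n` is the number of prime factors of `n` counted with multiplicity,
usually denoted `Ω(n)`.  For a finite solvable group `G`, `Omega (Nat.card G)`
is the composition length of `G`. -/
def Omega (n : ℕ) : ℕ := n.primeFactorsList.length

/-- `DerivedLengthEq G d` says that the derived (solvable) length of `G` is exactly `d`:
the `d`-th term of the derived series is trivial and no earlier term is trivial. -/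
def DerivedLengthEq (G : Type*) [Group G] (d : ℕ) : Prop :=
  derivedSeries G d = ⊥ ∧ ∀ k < d, derivedSeries G k ≠ ⊥

open Subgroup

/-- Three subgroups lemma, relative to a normal subgroup. -/
lemma three_subgroups_le {G : Type*} [Group G] {A B C N : Subgroup G} [N.Normal]
    (h1 : ⁅⁅B, C⁆, A⁆ ≤ N) (h2 : ⁅⁅C, A⁆, B⁆ ≤ N) : ⁅⁅A, B⁆, C⁆ ≤ N := by
  let π := QuotientGroup.mk' N
  have key : ∀ X Y Z : Subgroup G,
      ⁅⁅X, Y⁆, Z⁆ ≤ N ↔ ⁅⁅map π X, map π Y⁆, map π Z⁆ = ⊥ := by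
    intro X Y Z
    rw [← map_commutator, ← map_commutator, Subgroup.map_eq_bot_iff, QuotientGroup.ker_mk']
  rw [key] at h1 h2 ⊢
  exact commutator_commutator_eq_bot_of_rotate h1 h2

lemma lcs_commutator_le {G : Type*} [Group G] :
    ∀ n m : ℕ, ⁅(⊤ : Subgroup G).lowerCentralSeries m, (⊤ : Subgroup G).lowerCentralSeries n⁆ ≤
      (⊤ : Subgroup G).lowerCentralSeries (m + n + 1) := by
  intro n
  induction n with
  | zero =>
    intro m
    have : (⊤ : Subgroup G).lowerCentralSeries (m + 1) = ⁅(⊤ : Subgroup G).lowerCentralSeries m, ⊤⁆ := rfl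
    simp [this]
  | succ n ih =>
    intro m
    have hsucc : (⊤ : Subgroup G).lowerCentralSeries (n + 1) = ⁅(⊤ : Subgroup G).lowerCentralSeries n, ⊤⁆ := rfl
    rw [hsucc, commutator_comm]
    refine three_subgroups_le ?_ ?_
    · -- ⁅⁅⊤, lcs m⁆, lcs n⁆ ≤ lcs (m + (n+1) + 1)
      calc ⁅⁅(⊤ : Subgroup G), (⊤ : Subgroup G).lowerCentralSeries m⁆, (⊤ : Subgroup G).lowerCentralSeries n⁆
          ≤ ⁅(⊤ : Subgroup G).lowerCentralSeries (m + 1), (⊤ : Subgroup G).lowerCentralSeries n⁆ := by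
            refine commutator_mono ?_ le_rfl
            rw [commutator_comm]
            exact le_of_eq rfl
        _ ≤ (⊤ : Subgroup G).lowerCentralSeries (m + 1 + n + 1) := ih (m + 1)
        _ = (⊤ : Subgroup G).lowerCentralSeries (m + (n + 1) + 1) := by ring_nf
    · -- ⁅⁅lcs m, lcs n⁆, ⊤⁆ ≤ lcs (m + (n+1) + 1)
      calc ⁅⁅(⊤ : Subgroup G).lowerCentralSeries m, (⊤ : Subgroup G).lowerCentralSeries n⁆, (⊤ : Subgroup G)⁆
          ≤ ⁅(⊤ : Subgroup G).lowerCentralSeries (m + n + 1), (⊤ : Subgroup G)⁆ :=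
            commutator_mono (ih m) le_rfl
        _ = (⊤ : Subgroup G).lowerCentralSeries (m + n + 1 + 1) := rfl
        _ = (⊤ : Subgroup G).lowerCentralSeries (m + (n + 1) + 1) := by ring_nf

lemma derived_le_lcs {G : Type*} [Group G] (i : ℕ) :
    derivedSeries G i ≤ (⊤ : Subgroup G).lowerCentralSeries (2 ^ i - 1) := by
  induction i with
  | zero => simp
  | succ i ih =>
    have h2 : 1 ≤ 2 ^ i := Nat.one_le_two_pow
    calc derivedSeries G (i + 1) = ⁅derivedSeries G i, derivedSeries G i⁆ := rfl
      _ ≤ ⁅(⊤ : Subgroup G).lowerCentralSeries (2 ^ i - 1), (⊤ : Subgroup G).lowerCentralSeries (2 ^ i - 1)⁆ :=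
        commutator_mono ih ih
      _ ≤ (⊤ : Subgroup G).lowerCentralSeries ((2 ^ i - 1) + (2 ^ i - 1) + 1) := lcs_commutator_le _ _
      _ = (⊤ : Subgroup G).lowerCentralSeries (2 ^ (i + 1) - 1) := by
        congr 1
        have : 2 ^ (i + 1) = 2 ^ i + 2 ^ i := by ring
        omega

lemma lcs_eq_bot_of_stable {G : Type*} [Group G] (hG : Group.IsNilpotent G) (k : ℕ)
    (h : (⊤ : Subgroup G).lowerCentralSeries (k + 1) = (⊤ : Subgroup G).lowerCentralSeries k) :
    (⊤ : Subgroup G).lowerCentralSeries k = ⊥ := by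
  obtain ⟨n, hn⟩ := Subgroup.nilpotent_iff_lowerCentralSeries.mp hG
  have key : ∀ m : ℕ, (⊤ : Subgroup G).lowerCentralSeries (k + m) = (⊤ : Subgroup G).lowerCentralSeries k := by
    intro m
    induction m with
    | zero => rfl
    | succ m ih =>
      have : (⊤ : Subgroup G).lowerCentralSeries (k + m + 1) = ⁅(⊤ : Subgroup G).lowerCentralSeries (k + m), ⊤⁆ := rfl
      rw [show k + (m + 1) = k + m + 1 from rfl, this, ih]
      exact h
  have := key n
  have hle : (⊤ : Subgroup G).lowerCentralSeries (k + n) ≤ (⊤ : Subgroup G).lowerCentralSeries n :=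
    Subgroup.lowerCentralSeries_antitone (⊤ : Subgroup G) (Nat.le_add_left n k)
  rw [this, hn] at hle
  exact le_bot_iff.mp hle

lemma omega_pos_of_two_le {n : ℕ} (h : 2 ≤ n) : 1 ≤ Omega n := by
  rcases Nat.eq_zero_or_pos (Omega n) with h0 | h1
  · exfalso
    have := List.length_eq_zero_iff.mp h0
    rcases (Nat.primeFactorsList_eq_nil n).mp this with rfl | rfl <;> omega
  · exact h1

lemma omega_lt_of_dvd {a b : ℕ} (hb : b ≠ 0) (hdvd : a ∣ b) (hne : a ≠ b) :
    Omega a < Omega b := by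
  obtain ⟨c, rfl⟩ := hdvd
  have ha : a ≠ 0 := by rintro rfl; simp at hb
  have hc : c ≠ 0 := by rintro rfl; simp at hb
  have hc1 : c ≠ 1 := by rintro rfl; simp at hne
  have hperm := Nat.perm_primeFactorsList_mul ha hc
  have hlen : Omega (a * c) = Omega a + Omega c := by
    simpa [Omega] using hperm.length_eq
  have : 1 ≤ Omega c := omega_pos_of_two_le (by omega)
  omega

lemma omega_lt_of_lt {G : Type*} [Group G] [Finite G] {H K : Subgroup G} (h : H < K) :
    Omega (Nat.card H) < Omega (Nat.card K) := by
  have hdvd : Nat.card H ∣ Nat.card K := Subgroup.card_dvd_of_le h.le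
  have hne : Nat.card H ≠ Nat.card K := by
    intro he
    exact h.ne (Subgroup.eq_of_le_of_card_ge h.le he.ge)
  exact omega_lt_of_dvd Nat.card_pos.ne' hdvd hne

lemma lcs_chain {G : Type*} [Group G] [Finite G] (hG : Group.IsNilpotent G) :
    ∀ k : ℕ, (⊤ : Subgroup G).lowerCentralSeries k ≠ ⊥ →
      k + Omega (Nat.card ((⊤ : Subgroup G).lowerCentralSeries k)) ≤ Omega (Nat.card G) := by
  intro k
  induction k with
  | zero =>
    intro _
    have h0 : (⊤ : Subgroup G).lowerCentralSeries 0 = ⊤ := rfl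
    rw [h0, Subgroup.card_top]
    omega
  | succ k ih =>
    intro hk1
    have hk : (⊤ : Subgroup G).lowerCentralSeries k ≠ ⊥ := by
      intro h
      apply hk1
      have := Subgroup.lowerCentralSeries_antitone (⊤ : Subgroup G) (Nat.le_succ k)
      rw [h, le_bot_iff] at this
      exact this
    have hlt : (⊤ : Subgroup G).lowerCentralSeries (k + 1) < (⊤ : Subgroup G).lowerCentralSeries k := by
      rcases lt_or_eq_of_le (Subgroup.lowerCentralSeries_antitone (⊤ : Subgroup G) (Nat.le_succ k)) with h | h
      · exact h
      · exact absurd (lcs_eq_bot_of_stable hG k h) hk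
    have h1 : Omega (Nat.card ((⊤ : Subgroup G).lowerCentralSeries (k + 1))) <
        Omega (Nat.card ((⊤ : Subgroup G).lowerCentralSeries k)) := omega_lt_of_lt hlt
    have h2 := ih hk
    omega

/-- Every nontrivial finite nilpotent group `G` with derived length `d` satisfies
`2^(d−1) ≤ Ω(|G|)`. -/
theorem nilpotent_comp_length_ge (G : Type*) [Group G] [Finite G] [Nontrivial G]
    (hG : Group.IsNilpotent G) (d : ℕ) (hd : DerivedLengthEq G d) :
    2 ^ (d - 1) ≤ Omega (Nat.card G) := by
  have hd1 : 1 ≤ d := by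
    by_contra h
    push_neg at h
    interval_cases d
    obtain ⟨x, hx⟩ := exists_ne (1 : G)
    have hx2 : x ∈ (⊥ : Subgroup G) := hd.1 ▸ Subgroup.mem_top x
    exact hx (by simpa using hx2)
  have hder : derivedSeries G (d - 1) ≠ ⊥ := hd.2 (d - 1) (by omega)
  set k := 2 ^ (d - 1) - 1 with hk
  have hlcs : (⊤ : Subgroup G).lowerCentralSeries k ≠ ⊥ := by
    intro h
    exact hder (le_bot_iff.mp (h ▸ derived_le_lcs (d - 1)))
  have hchain := lcs_chain hG k hlcs
  have hnt : Nontrivial ((⊤ : Subgroup G).lowerCentralSeries k) := by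
    rcases ((⊤ : Subgroup G).lowerCentralSeries k).bot_or_nontrivial with h | h
    · exact absurd h hlcs
    · exact h
  have hcard : 2 ≤ Nat.card ((⊤ : Subgroup G).lowerCentralSeries k) := Finite.one_lt_card_iff_nontrivial.mpr hnt
  have hpos : 1 ≤ Omega (Nat.card ((⊤ : Subgroup G).lowerCentralSeries k)) := omega_pos_of_two_le hcard
  have h2 : 1 ≤ 2 ^ (d - 1) := Nat.one_le_two_pow
  omega
end

section
/- For every integer r ≥ 1 there exists a finite solvable group G with derived length exactly 5r and Ω(|G|) = 7·(9^r − 1)/8, where Ω(|G|) is the number of prime factors of |G| counted with multiplicity. (Such a group is the r-fold iterated wreath product of G₉ = F₃² ⋊ GL(2, F₃), a transitive subgroup of S_{9^r}.) -/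
section IWP

open scoped commutatorElement

-- [assume t2 contents available: copy minimal]
abbrev Q8 := QuaternionGroup 2
abbrev C3 := Multiplicative (ZMod 3)
abbrev C2 := Multiplicative (ZMod 2)
abbrev V2 := ZMod 3 × ZMod 3
abbrev Vg := Multiplicative V2

instance mulAutDecEq {M : Type*} [Monoid M] [Fintype M] [DecidableEq M] :
    DecidableEq (MulAut M) := fun f g =>
  decidable_of_iff (∀ x, f x = g x) ⟨fun h => MulEquiv.ext h, fun h x => by rw [h]⟩

namespace SemidirectProduct
variable {N G : Type*} [Group N] [Group G] {φ : G →* MulAut N}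
instance instFintypeSD [Fintype N] [Fintype G] : Fintype (N ⋊[φ] G) :=
  Fintype.ofEquiv _ equivProd.symm
instance instFiniteSD [Finite N] [Finite G] : Finite (N ⋊[φ] G) :=
  Finite.of_equiv _ equivProd.symm
end SemidirectProduct

open QuaternionGroup in
def σf : Q8 → Q8
  | .a i => ![.a 0, .xa 0, .a 2, .xa 2] i
  | .xa i => ![.xa 3, .a 3, .xa 1, .a 1] i
open QuaternionGroup in
def df : Q8 → Q8
  | .a i => ![.a 0, .a 3, .a 2, .a 1] i
  | .xa i => ![.xa 1, .xa 0, .xa 3, .xa 2] i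
def σAut : MulAut Q8 :=
  { toFun := σf, invFun := σf ∘ σf
    left_inv := by decide, right_inv := by decide, map_mul' := by decide }
def dAut : MulAut Q8 :=
  { toFun := df, invFun := df
    left_inv := by decide, right_inv := by decide, map_mul' := by decide }
def φ3 : C3 →* MulAut Q8 := MonoidHom.mk' (fun m => σAut ^ m.toAdd.val) (by decide)
abbrev QC := Q8 ⋊[φ3] C3
def ψf : QC → QC := fun x => ⟨dAut x.left, x.right⁻¹⟩
def ψAut : MulAut QC :=
  { toFun := ψf, invFun := ψf
    left_inv := by decide, right_inv := by decide, map_mul' := by decide }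
def φ2 : C2 →* MulAut QC := MonoidHom.mk' (fun e => ψAut ^ e.toAdd.val) (by decide)
abbrev Hgrp := QC ⋊[φ2] C2

open SemidirectProduct
def hQ : Q8 →* Hgrp := inl.comp inl
def hu : Hgrp := inl (inr (Multiplicative.ofAdd 1))
def hd : Hgrp := inr (Multiplicative.ofAdd 1)
def hi : Hgrp := hQ (.a 1)
def hj : Hgrp := hQ (.xa 0)
def hk : Hgrp := hQ (.xa 3)
def hneg : Hgrp := hQ (.a 2)

-- ===== the 2-dim representation =====
def autI : MulAut Vg :=
  { toFun := fun x => .ofAdd (-x.toAdd.2, x.toAdd.1)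
    invFun := fun x => .ofAdd (x.toAdd.2, -x.toAdd.1)
    left_inv := by decide, right_inv := by decide, map_mul' := by decide }
def autJ : MulAut Vg :=
  { toFun := fun x => .ofAdd (x.toAdd.1 + x.toAdd.2, x.toAdd.1 - x.toAdd.2)
    invFun := fun x => .ofAdd (-x.toAdd.1 - x.toAdd.2, -x.toAdd.1 + x.toAdd.2)
    left_inv := by decide, right_inv := by decide, map_mul' := by decide }
def autU : MulAut Vg :=
  { toFun := fun x => .ofAdd (x.toAdd.1 + x.toAdd.2, x.toAdd.2)
    invFun := fun x => .ofAdd (x.toAdd.1 - x.toAdd.2, x.toAdd.2)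
    left_inv := by decide, right_inv := by decide, map_mul' := by decide }
def autD : MulAut Vg :=
  { toFun := fun x => .ofAdd (x.toAdd.1, -x.toAdd.2)
    invFun := fun x => .ofAdd (x.toAdd.1, -x.toAdd.2)
    left_inv := by decide, right_inv := by decide, map_mul' := by decide }

open QuaternionGroup in
def ρQf : Q8 → MulAut Vg
  | .a i => autI ^ i.val
  | .xa i => autJ * autI ^ i.val

def ρQ : Q8 →* MulAut Vg := MonoidHom.mk' ρQf (by decide)
def ρ3 : C3 →* MulAut Vg := MonoidHom.mk' (fun m => autU ^ m.toAdd.val) (by decide)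
def ρ2 : C2 →* MulAut Vg := MonoidHom.mk' (fun e => autD ^ e.toAdd.val) (by decide)

theorem compatQC : ∀ (g : C3) (q : Q8), ρQ (φ3 g q) = ρ3 g * ρQ q * (ρ3 g)⁻¹ := by decide

def ρQC : QC →* MulAut Vg :=
  SemidirectProduct.lift ρQ ρ3 (fun g => MonoidHom.ext fun q => by
    simpa [MulAut.conj_apply] using compatQC g q)

set_option maxRecDepth 2000000 in
theorem compatH : ∀ (e : C2) (x : QC), ρQC (φ2 e x) = ρ2 e * ρQC x * (ρ2 e)⁻¹ := by decide

def ρH : Hgrp →* MulAut Vg :=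
  SemidirectProduct.lift ρQC ρ2 (fun e => MonoidHom.ext fun x => by
    simpa [MulAut.conj_apply] using compatH e x)

example : ∀ v : Vg, ρH hneg v = v⁻¹ := by decide

abbrev G9 := Vg ⋊[ρH] Hgrp

theorem sd_card {N G : Type*} [Group N] [Group G] {φ : G →* MulAut N} :
    Nat.card (N ⋊[φ] G) = Nat.card N * Nat.card G := by
  rw [Nat.card_congr SemidirectProduct.equivProd, Nat.card_prod]

example : Nat.card G9 = 432 := by
  rw [sd_card, sd_card, sd_card]
  rw [Nat.card_eq_fintype_card (α := Vg), Nat.card_eq_fintype_card (α := Q8),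
    Nat.card_eq_fintype_card (α := C3), Nat.card_eq_fintype_card (α := C2)]
  rfl

section Gen
variable {G G' : Type*} [Group G] [Group G']

theorem derivedSeries_le_comap (f : G →* G') (k : ℕ) :
    derivedSeries G k ≤ (derivedSeries G' k).comap f :=
  Subgroup.map_le_iff_le_comap.mp (map_derivedSeries_le_derivedSeries f k)

theorem mem_derivedSeries_map {f : G →* G'} {k : ℕ} {x : G}
    (hx : x ∈ derivedSeries G k) : f x ∈ derivedSeries G' k :=
  map_derivedSeries_le_derivedSeries f k ⟨x, hx, rfl⟩

theorem derivedSeries_succ_le (k : ℕ) : derivedSeries G (k + 1) ≤ derivedSeries G k := by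
  induction k with
  | zero => exact le_top
  | succ k ih => exact Subgroup.commutator_mono ih ih

theorem derivedSeries_antitone' {j k : ℕ} (h : j ≤ k) :
    derivedSeries G k ≤ derivedSeries G j := by
  induction h with
  | refl => exact le_rfl
  | step _ ih => exact (derivedSeries_succ_le _).trans ih

theorem derivedSeries_le_map_of_le {N : Subgroup G} {m : ℕ}
    (h : derivedSeries G m ≤ N) (j : ℕ) :
    derivedSeries G (m + j) ≤ (derivedSeries N j).map N.subtype := by
  induction j with
  | zero =>
    rw [derivedSeries_zero, ← MonoidHom.range_eq_map, N.range_subtype]; exact h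
  | succ j ih =>
    show derivedSeries G ((m+j)+1) ≤ _
    rw [derivedSeries_succ, derivedSeries_succ, Subgroup.map_commutator]
    exact Subgroup.commutator_mono ih ih

theorem map_derivedSeries_le_of_range_le {X : Type*} [Group X] {ψ : X →* G} {m : ℕ}
    (h : ψ.range ≤ derivedSeries G m) (j : ℕ) :
    (derivedSeries X j).map ψ ≤ derivedSeries G (m + j) := by
  induction j with
  | zero =>
    rw [derivedSeries_zero, ← MonoidHom.range_eq_map]; exact h
  | succ j ih =>
    show _ ≤ derivedSeries G ((m+j)+1)
    rw [derivedSeries_succ, derivedSeries_succ, Subgroup.map_commutator]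
    exact Subgroup.commutator_mono ih ih

theorem derivedSeries_pi_eq_bot {ι B : Type*} [Group B] {s : ℕ}
    (hB : derivedSeries B s = ⊥) : derivedSeries (ι → B) s = ⊥ := by
  rw [eq_bot_iff]
  intro f hf
  have : ∀ x : ι, f x = 1 := fun x => by
    have := mem_derivedSeries_map (f := Pi.evalMonoidHom (fun _ : ι => B) x) hf
    rw [hB] at this
    exact this
  exact Subgroup.mem_bot.mpr (funext this)

theorem ne_bot_of_mem {H : Subgroup G} {x : G} (hx : x ∈ H) (hne : x ≠ 1) : H ≠ ⊥ :=
  fun h => hne (Subgroup.mem_bot.mp (h ▸ hx))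

theorem comm_group_derived_one_le_ker {A : Type*} [CommGroup A] (f : G →* A) :
    derivedSeries G 1 ≤ f.ker := by
  rw [derivedSeries_succ, derivedSeries_zero]
  rw [Subgroup.commutator_le]
  intro a _ b _
  rw [MonoidHom.mem_ker, map_commutatorElement]
  exact commutatorElement_eq_one_iff_commute.mpr (mul_comm _ _)

end Gen

-- ===== derived series of Hgrp =====

-- ===== upper bounds for derived series of Hgrp =====
theorem Hds1 : derivedSeries Hgrp 1 ≤ (inl : QC →* Hgrp).range := by
  rw [range_inl_eq_ker_rightHom]; exact comm_group_derived_one_le_ker _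

theorem QCds1 : derivedSeries QC 1 ≤ (inl : Q8 →* QC).range := by
  rw [range_inl_eq_ker_rightHom]; exact comm_group_derived_one_le_ker _

theorem range_commutator {A B : Type*} [Group A] [Group B] (f : A →* B) :
    ⁅f.range, f.range⁆ = Subgroup.map f (derivedSeries A 1) := by
  rw [derivedSeries_succ, derivedSeries_zero, Subgroup.map_commutator,
    ← MonoidHom.range_eq_map]

theorem Hds2 : derivedSeries Hgrp 2 ≤ hQ.range := by
  show derivedSeries Hgrp (1+1) ≤ _
  rw [derivedSeries_succ]
  refine le_trans (Subgroup.commutator_mono Hds1 Hds1) ?_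
  rw [range_commutator]
  refine le_trans (Subgroup.map_mono QCds1) ?_
  intro x hx
  obtain ⟨y, ⟨q, rfl⟩, rfl⟩ := hx
  exact ⟨q, rfl⟩

def KQ3 : Subgroup Q8 := Subgroup.zpowers (QuaternionGroup.a 2)

theorem Q8comm : ∀ q q' : Q8, ⁅q, q'⁆ = 1 ∨ ⁅q, q'⁆ = QuaternionGroup.a 2 := by decide

theorem Q8ds1 : derivedSeries Q8 1 ≤ KQ3 := by
  rw [derivedSeries_succ, derivedSeries_zero, Subgroup.commutator_le]
  intro q _ q' _
  rcases Q8comm q q' with h | h <;> rw [h]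
  · exact Subgroup.one_mem _
  · exact Subgroup.mem_zpowers _

theorem Hds3 : derivedSeries Hgrp 3 ≤ Subgroup.map hQ KQ3 := by
  show derivedSeries Hgrp (2+1) ≤ _
  rw [derivedSeries_succ]
  refine le_trans (Subgroup.commutator_mono Hds2 Hds2) ?_
  rw [range_commutator]
  exact Subgroup.map_mono Q8ds1

theorem zpowers_commutator {A : Type*} [Group A] (g : A) :
    ⁅Subgroup.zpowers g, Subgroup.zpowers g⁆ = ⊥ := by
  rw [eq_bot_iff, Subgroup.commutator_le]
  intro x hx y hy
  obtain ⟨m, rfl⟩ := Subgroup.mem_zpowers_iff.mp hx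
  obtain ⟨n, rfl⟩ := Subgroup.mem_zpowers_iff.mp hy
  rw [Subgroup.mem_bot, commutatorElement_eq_one_iff_commute]
  exact Commute.zpow_zpow (Commute.refl g) m n

theorem Hds4 : derivedSeries Hgrp 4 = ⊥ := by
  rw [eq_bot_iff]
  show derivedSeries Hgrp (3+1) ≤ ⊥
  rw [derivedSeries_succ]
  refine le_trans (Subgroup.commutator_mono Hds3 Hds3) ?_
  rw [← Subgroup.map_commutator]
  show Subgroup.map hQ ⁅Subgroup.zpowers _, Subgroup.zpowers _⁆ ≤ ⊥
  rw [zpowers_commutator]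
  simp

-- ===== lower bound certificates in Hgrp =====
theorem hu_mem : hu ∈ derivedSeries Hgrp 1 := by
  rw [show hu = ⁅hd, hu⁆ from by decide, derivedSeries_succ, derivedSeries_zero]
  exact Subgroup.commutator_mem_commutator (Subgroup.mem_top _) (Subgroup.mem_top _)

theorem hk_mem : hk ∈ derivedSeries Hgrp 1 := by
  rw [show hk = ⁅hu, hi⁆ from by decide, derivedSeries_succ, derivedSeries_zero]
  exact Subgroup.commutator_mem_commutator (Subgroup.mem_top _) (Subgroup.mem_top _)

theorem hj_mem2 : hj ∈ derivedSeries Hgrp 2 := by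
  rw [show hj = ⁅hu, hk⁆ from by decide]
  exact Subgroup.commutator_mem_commutator hu_mem hk_mem

theorem hi_mem2 : hi ∈ derivedSeries Hgrp 2 := by
  rw [show hi = ⁅hu, hj⁆ from by decide]
  exact Subgroup.commutator_mem_commutator hu_mem (derivedSeries_succ_le 1 hj_mem2)

theorem hneg_mem3 : hneg ∈ derivedSeries Hgrp 3 := by
  rw [show hneg = ⁅hi, hj⁆ from by decide]
  exact Subgroup.commutator_mem_commutator hi_mem2 hj_mem2

-- ===== derived series of G9 =====
theorem G9ds5 : derivedSeries G9 5 = ⊥ := by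
  have h4 : derivedSeries G9 4 ≤ (inl : Vg →* G9).range := by
    rw [range_inl_eq_ker_rightHom]
    refine le_trans (derivedSeries_le_comap rightHom 4) ?_
    intro x hx
    rw [Subgroup.mem_comap] at hx
    rw [MonoidHom.mem_ker]
    rw [Hds4] at hx
    exact Subgroup.mem_bot.mp hx
  rw [eq_bot_iff]
  show derivedSeries G9 (4+1) ≤ ⊥
  rw [derivedSeries_succ]
  refine le_trans (Subgroup.commutator_mono h4 h4) ?_
  rw [range_commutator]
  have : derivedSeries Vg 1 = ⊥ := by
    rw [eq_bot_iff]
    exact comm_group_derived_one_le_ker (MonoidHom.id Vg)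
  rw [this]
  simp

theorem rho_hneg : ∀ v : Vg, ρH hneg v = v⁻¹ := by decide

theorem G9_key : ∀ v : Vg, ⁅(inl (v * v) : G9), inr hneg⁆ = (inl v : G9) := by decide

theorem V_le_G9ds : ∀ k, k ≤ 4 → (inl : Vg →* G9).range ≤ derivedSeries G9 k := by
  intro k
  induction k with
  | zero => intro _; exact le_top
  | succ k ih =>
    intro hk
    rintro x ⟨v, rfl⟩
    rw [← G9_key v, derivedSeries_succ]
    refine Subgroup.commutator_mem_commutator ?_ ?_
    · exact ih (le_trans (Nat.le_succ k) hk) ⟨v * v, rfl⟩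
    · have : hneg ∈ derivedSeries Hgrp k :=
        derivedSeries_antitone' (by omega) hneg_mem3
      exact mem_derivedSeries_map (f := (inr : Hgrp →* G9)) this

theorem G9ds_ne_bot : ∀ k ≤ 4, derivedSeries G9 k ≠ ⊥ := by
  intro k hk
  refine ne_bot_of_mem (V_le_G9ds k hk ⟨Multiplicative.ofAdd (1, 0), rfl⟩) ?_
  decide

-- ===== permutation action of G9 on Vg =====
def trV : Vg →* Equiv.Perm Vg :=
  MonoidHom.mk' (fun v => Equiv.mulLeft v) (fun a b => by
    ext x : 1
    simp [mul_assoc])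

theorem compatPerm : ∀ (h : Hgrp) (v : Vg),
    trV (ρH h v) = MulAut.toPerm Vg (ρH h) * trV v * (MulAut.toPerm Vg (ρH h))⁻¹ := by
  intro h v
  ext x : 1
  simp [trV, mul_assoc, Equiv.Perm.inv_def, Equiv.apply_symm_apply]
  show _ = ρH h (v * (ρH h).symm x)
  rw [map_mul, MulEquiv.apply_symm_apply]

def πperm : G9 →* Equiv.Perm Vg :=
  SemidirectProduct.lift trV ((MulAut.toPerm Vg).comp ρH) (fun g => MonoidHom.ext fun v => by
    simpa [MulAut.conj_apply] using compatPerm g v)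

-- ===== the wreath product construction =====
variable (B : Type) [Group B]

def permAutPi : Equiv.Perm Vg →* MulAut (Vg → B) :=
  MonoidHom.mk' (fun e =>
    { toFun := fun f => f ∘ e.symm
      invFun := fun f => f ∘ e
      left_inv := fun f => by ext x; simp
      right_inv := fun f => by ext x; simp
      map_mul' := fun f g => rfl })
    (fun e1 e2 => by
      ext f x
      rfl)

def ΦW : G9 →* MulAut (Vg → B) := (permAutPi B).comp πperm

abbrev Wr := (Vg → B) ⋊[ΦW B] G9

theorem comm_inl_inr {N G : Type*} [Group N] [Group G] {φ : G →* MulAut N} (n : N) (g : G) :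
    ⁅(inl n : N ⋊[φ] G), (inr g : N ⋊[φ] G)⁆ = inl (n * φ g n⁻¹) := by
  rw [commutatorElement_def, map_mul, mul_assoc, mul_assoc, ← mul_assoc (inr g),
    ← map_inv, inl_aut, map_inv]
  simp

variable {B : Type} [Group B]

theorem wstep {k : ℕ} {a : G9} (ha : a ∈ derivedSeries G9 k)
    {S S' : Finset Vg} {δ : Vg} {b : B}
    (hsub : ∀ γ ∈ S, γ ∈ S') (hsub2 : ∀ γ ∈ S, (πperm a).symm γ ∈ S')
    (hδ : (πperm a).symm δ ∈ S')
    (h : ∃ f : Vg → B, inl f ∈ derivedSeries (Wr B) k ∧ f δ = b ∧ ∀ γ ∈ S', f γ = 1) :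
    ∃ f : Vg → B, inl f ∈ derivedSeries (Wr B) (k+1) ∧ f δ = b ∧ ∀ γ ∈ S, f γ = 1 := by
  obtain ⟨g, hg, hgδ, hgS⟩ := h
  refine ⟨fun x => g x * (g ((πperm a).symm x))⁻¹, ?_, ?_, ?_⟩
  · have heq : (inl (fun x => g x * (g ((πperm a).symm x))⁻¹) : Wr B)
        = ⁅(inl g : Wr B), inr a⁆ := by
      rw [comm_inl_inr]
      rfl
    rw [heq, derivedSeries_succ]
    exact Subgroup.commutator_mem_commutator hg
      (mem_derivedSeries_map (f := (inr : G9 →* Wr B)) ha)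
  · show g δ * (g ((πperm a).symm δ))⁻¹ = b
    rw [hgδ, hgS _ hδ, inv_one, mul_one]
  · intro γ hγ
    show g γ * (g ((πperm a).symm γ))⁻¹ = 1
    rw [hgS _ (hsub _ hγ), hgS _ (hsub2 _ hγ), inv_one, mul_one]

def t10 : G9 := inl (.ofAdd (1, 0))
def t01 : G9 := inl (.ofAdd (0, 1))
def ai : G9 := t10 * inr hi

theorem t10_mem {k : ℕ} (hk : k ≤ 4) : t10 ∈ derivedSeries G9 k :=
  V_le_G9ds k hk ⟨_, rfl⟩
theorem t01_mem (k : ℕ) (hk : k ≤ 4) : t01 ∈ derivedSeries G9 k :=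
  V_le_G9ds k hk ⟨_, rfl⟩
theorem ai_mem : ai ∈ derivedSeries G9 1 :=
  mul_mem (t10_mem (by norm_num))
    (mem_derivedSeries_map (f := (inr : Hgrp →* G9)) (derivedSeries_succ_le 1 hi_mem2))

open Multiplicative in
theorem wreath_surj (b : B) :
    ∃ f : Vg → B, inl f ∈ derivedSeries (Wr B) 5 ∧ f 1 = b := by
  have h0 : ∃ f : Vg → B, inl f ∈ derivedSeries (Wr B) 0 ∧ f 1 = b ∧
      ∀ γ ∈ (Finset.univ.erase (1 : Vg)), f γ = 1 := by
    refine ⟨fun x => if x = 1 then b else 1, Subgroup.mem_top _, if_pos rfl, ?_⟩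
    intro γ hγ
    exact if_neg (Finset.ne_of_mem_erase hγ)
  have h1 := wstep (a := t10) (t10_mem (by norm_num))
    (S := {ofAdd (0,1), ofAdd (0,2), ofAdd (1,1), ofAdd (1,2),
           ofAdd (2,0), ofAdd (2,1), ofAdd (2,2)})
    (S' := Finset.univ.erase (1 : Vg)) (δ := 1) (b := b)
    (by decide) (by decide) (by decide) h0
  have h2 := wstep (a := ai) ai_mem
    (S := {ofAdd (0,1), ofAdd (0,2), ofAdd (2,0), ofAdd (2,1), ofAdd (2,2)})
    (S' := {ofAdd (0,1), ofAdd (0,2), ofAdd (1,1), ofAdd (1,2),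
            ofAdd (2,0), ofAdd (2,1), ofAdd (2,2)}) (δ := 1) (b := b)
    (by decide) (by decide) (by decide) h1
  have h3 := wstep (a := t10) (t10_mem (by norm_num))
    (S := {ofAdd (0,1), ofAdd (0,2)})
    (S' := {ofAdd (0,1), ofAdd (0,2), ofAdd (2,0), ofAdd (2,1), ofAdd (2,2)})
    (δ := 1) (b := b) (by decide) (by decide) (by decide) h2
  have h4 := wstep (a := t01) (t01_mem 3 (by norm_num))
    (S := {ofAdd (0,2)}) (S' := {ofAdd (0,1), ofAdd (0,2)})
    (δ := 1) (b := b) (by decide) (by decide) (by decide) h3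
  have h5 := wstep (a := t01) (t01_mem 4 (by norm_num))
    (S := (∅ : Finset Vg)) (S' := {ofAdd (0,2)})
    (δ := 1) (b := b) (by decide) (by decide) (by decide) h4
  obtain ⟨f, hf, hfδ, -⟩ := h5
  exact ⟨f, hf, hfδ⟩

-- ===== wreath product: derived series bounds and cardinality =====
theorem wr_ds5_le : derivedSeries (Wr B) 5 ≤ (inl : (Vg → B) →* Wr B).range := by
  rw [range_inl_eq_ker_rightHom]
  refine le_trans (derivedSeries_le_comap rightHom 5) ?_
  intro x hx
  rw [Subgroup.mem_comap, G9ds5] at hx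
  exact Subgroup.mem_bot.mp hx

theorem wr_upper {s : ℕ} (hB : derivedSeries B s = ⊥) :
    derivedSeries (Wr B) (5 + s) = ⊥ := by
  have h := derivedSeries_le_map_of_le (wr_ds5_le (B := B)) s
  have hN : derivedSeries ((inl : (Vg → B) →* Wr B).range) s = ⊥ := by
    have e := MonoidHom.ofInjective (inl_injective (φ := ΦW B))
    have h1 : derivedSeries (Vg → B) s = ⊥ := derivedSeries_pi_eq_bot hB
    have h2 := map_derivedSeries_eq (f := e.toMonoidHom)
      (MulEquiv.surjective e) s
    rw [h1, Subgroup.map_bot] at h2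
    exact h2.symm
  rw [hN, Subgroup.map_bot] at h
  exact le_bot_iff.mp h

theorem wr_lower {j : ℕ} (hj : derivedSeries B j ≠ ⊥) :
    derivedSeries (Wr B) (5 + j) ≠ ⊥ := by
  have hx : ∃ x ∈ derivedSeries B j, x ≠ 1 := by
    by_contra hcon
    push_neg at hcon
    exact hj (Subgroup.eq_bot_iff_forall _ |>.mpr hcon)
  obtain ⟨x, hx, hx1⟩ := hx
  set C : Subgroup (Vg → B) := (derivedSeries (Wr B) 5).comap inl with hC
  have he : Function.Surjective
      ((Pi.evalMonoidHom (fun _ : Vg => B) 1).comp C.subtype) := by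
    intro b
    obtain ⟨f, hf, hf1⟩ := wreath_surj b
    exact ⟨⟨f, hf⟩, hf1⟩
  have hmap := map_derivedSeries_eq he j
  rw [← hmap] at hx
  obtain ⟨c, hc, hcx⟩ := hx
  have hψ : ((inl : (Vg → B) →* Wr B).comp C.subtype).range ≤ derivedSeries (Wr B) 5 := by
    rintro y ⟨c', rfl⟩
    exact c'.2
  have hmem := map_derivedSeries_le_of_range_le hψ j ⟨c, hc, rfl⟩
  refine ne_bot_of_mem hmem ?_
  intro hcon
  have : (c : Vg → B) = 1 := inl_injective (φ := ΦW B) (by simpa using hcon)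
  apply hx1
  rw [← hcx]
  show (c : Vg → B) 1 = 1
  rw [this]
  rfl

theorem g9_card : Nat.card G9 = 432 := by
  rw [sd_card, sd_card, sd_card]
  rw [Nat.card_eq_fintype_card (α := Vg), Nat.card_eq_fintype_card (α := Q8),
    Nat.card_eq_fintype_card (α := C3), Nat.card_eq_fintype_card (α := C2)]
  rfl

theorem wr_card [Finite B] : Nat.card (Wr B) = Nat.card B ^ 9 * 432 := by
  rw [sd_card, g9_card, Nat.card_fun]
  congr 2
  rw [Nat.card_eq_fintype_card (α := Vg)]
  rfl

theorem wr_ne_bot_low {k : ℕ} (hk : k ≤ 4) : derivedSeries (Wr B) k ≠ ⊥ := by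
  refine ne_bot_of_mem
    (mem_derivedSeries_map (f := (inr : G9 →* Wr B)) (t10_mem hk)) ?_
  intro hcon
  have : t10 = 1 := inr_injective (φ := ΦW B) (by simpa using hcon)
  exact absurd this (by decide)

theorem Omega_eq (n : ℕ) : Omega n = ArithmeticFunction.cardFactors n :=
  (ArithmeticFunction.cardFactors_apply).symm

theorem Omega_mul {m n : ℕ} (hm : m ≠ 0) (hn : n ≠ 0) :
    Omega (m * n) = Omega m + Omega n := by
  rw [Omega_eq, Omega_eq, Omega_eq]
  exact ArithmeticFunction.cardFactors_mul hm hn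

theorem Omega_pow {m k : ℕ} (hm : m ≠ 0) : Omega (m ^ k) = k * Omega m := by
  induction k with
  | zero => simp [Omega]
  | succ k ih =>
    rw [pow_succ, Omega_mul (pow_ne_zero _ hm) hm, ih]
    ring

theorem Omega_prime {p : ℕ} (hp : p.Prime) : Omega p = 1 := by
  rw [Omega, Nat.primeFactorsList_prime hp]
  rfl

theorem Omega_432 : Omega 432 = 7 := by
  rw [show (432 : ℕ) = 2 ^ 4 * 3 ^ 3 by norm_num,
    Omega_mul (by norm_num) (by norm_num),
    Omega_pow (by norm_num), Omega_pow (by norm_num),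
    Omega_prime (by norm_num), Omega_prime (by norm_num)]

-- ===== the tower =====
structure Pk : Type 1 where
  G : Type
  [grp : Group G]
  [fin : Finite G]

attribute [instance] Pk.grp Pk.fin

def tow : ℕ → Pk
  | 0 => ⟨G9⟩
  | n + 1 => ⟨Wr (tow n).G⟩

theorem tow_facts (n : ℕ) :
    derivedSeries (tow n).G (5 * (n + 1)) = ⊥ ∧
    (∀ k < 5 * (n + 1), derivedSeries (tow n).G k ≠ ⊥) ∧
    8 * Omega (Nat.card (tow n).G) + 7 = 7 * 9 ^ (n + 1) := by
  induction n with
  | zero =>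
    refine ⟨G9ds5, ?_, ?_⟩
    · intro k hk
      exact G9ds_ne_bot k (by omega)
    · show 8 * Omega (Nat.card G9) + 7 = 7 * 9 ^ 1
      rw [g9_card, Omega_432]
      norm_num
  | succ n ih =>
    obtain ⟨hbot, hne, hcard⟩ := ih
    have hup : derivedSeries (tow (n+1)).G (5 * (n + 1 + 1)) = ⊥ := by
      show derivedSeries (Wr (tow n).G) (5 * (n+1+1)) = ⊥
      have : 5 * (n + 1 + 1) = 5 + 5 * (n + 1) := by ring
      rw [this]
      exact wr_upper hbot
    have hcard0 : Nat.card (tow n).G ≠ 0 := Nat.card_ne_zero.mpr ⟨⟨1⟩, (tow n).fin⟩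
    refine ⟨hup, ?_, ?_⟩
    · intro k hk
      show derivedSeries (Wr (tow n).G) k ≠ ⊥
      rcases Nat.lt_or_ge k 5 with h5 | h5
      · exact wr_ne_bot_low (by omega)
      · obtain ⟨j, rfl⟩ : ∃ j, k = 5 + j := ⟨k - 5, by omega⟩
        exact wr_lower (hne j (by omega))
    · show 8 * Omega (Nat.card (Wr (tow n).G)) + 7 = 7 * 9 ^ (n + 1 + 1)
      rw [wr_card, Omega_mul (pow_ne_zero _ hcard0) (by norm_num),
        Omega_pow hcard0, Omega_432]
      have : 7 * 9 ^ (n + 1 + 1) = 9 * (7 * 9 ^ (n + 1)) := by ring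
      rw [this, ← hcard]
      ring


end IWP

/-- For every `r ≥ 1` there is a finite solvable group with derived length exactly `5r`
and composition length `7·(9^r − 1)/8` (e.g. the `r`-fold iterated wreath product of
`G₉ = F₃² ⋊ GL(2, F₃)`). -/
theorem exists_solvable_derived_length_five_mul (r : ℕ) (hr : 1 ≤ r) :
    ∃ (G : Type) (_ : Group G) (_ : Finite G), IsSolvable G ∧
      DerivedLengthEq G (5 * r) ∧ Omega (Nat.card G) = 7 * (9 ^ r - 1) / 8 := by
  obtain ⟨n, rfl⟩ : ∃ n, r = n + 1 := ⟨r - 1, by omega⟩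
  obtain ⟨hbot, hne, hcard⟩ := tow_facts n
  refine ⟨(tow n).G, (tow n).grp, (tow n).fin, ⟨5 * (n + 1), hbot⟩, ⟨hbot, hne⟩, ?_⟩
  have h9 : 1 ≤ 9 ^ (n + 1) := Nat.one_le_pow _ _ (by norm_num)
  omega
end
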